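/- Let p(x_1, …, x_n) be a Laurent polynomial over ℂ in x_1, x_1^{−1}, …, x_n, x_n^{−1}, fix i with 1 ≤ i ≤ n, and let Op := id + Δ_{k_i} ∘ p(E_{k_1}, …, E_{k_n}) be the corresponding operator on ℂ[k_1, …, k_n]. Then Op is bijective, its inverse is given on each polynomial G by Op^{−1} G = ∑_{l=0}^{∞} (−1)^l Δ_{k_i}^l p(E_{k_1}, …, E_{k_n})^l G (a sum with only finitely many nonzero terms, with the l = 0 term equal to G), and moreover deg_{k_i} G = deg_{k_i} (Op G) = deg_{k_i} (Op^{−1} G) for every polynomial G, where deg_{k_i} denotes the degree in the variable k_i. -/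

import Mathlib

open MvPolynomial Finset

/-- The shift of a polynomial by an integer vector `a`:
`(shiftPolyC a p)(x₁,…,xₙ) = p(x₁ + a₁, …, xₙ + aₙ)`. -/
noncomputable def shiftPolyC {n : ℕ} (a : Fin n → ℤ) (p : MvPolynomial (Fin n) ℂ) :
    MvPolynomial (Fin n) ℂ :=
  aeval (fun j => X j + C ((a j : ℂ))) p

/-- A Laurent polynomial `Q` in the commuting shift operators `E₁,…,Eₙ` (an element of the
group algebra `ℂ[ℤⁿ]`, the exponent vector recording the shift) acts on polynomials. -/
noncomputable def opApplyC {n : ℕ} (Q : AddMonoidAlgebra ℂ (Fin n → ℤ))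
    (p : MvPolynomial (Fin n) ℂ) : MvPolynomial (Fin n) ℂ :=
  Q.coeff.sum fun a c => c • shiftPolyC a p

/-- The shift operator `E_{k_i}` as an element of the operator algebra. -/
noncomputable def EshC {n : ℕ} (i : Fin n) : AddMonoidAlgebra ℂ (Fin n → ℤ) :=
  AddMonoidAlgebra.single (Pi.single i 1) 1

/-- The inverse shift operator `E_{k_i}⁻¹`. -/
noncomputable def EshInvC {n : ℕ} (i : Fin n) : AddMonoidAlgebra ℂ (Fin n → ℤ) :=
  AddMonoidAlgebra.single (Pi.single i (-1)) 1

/-- The difference operator `Δ_{k_i} = E_{k_i} - id`. -/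
noncomputable def DltC {n : ℕ} (i : Fin n) : AddMonoidAlgebra ℂ (Fin n → ℤ) :=
  EshC i - 1

namespace OpAux

variable {n : ℕ}

noncomputable def shEnd (a : Fin n → ℤ) : Module.End ℂ (MvPolynomial (Fin n) ℂ) :=
  (aeval (R := ℂ) (fun j => X j + C ((a j : ℂ)))).toLinearMap

lemma shEnd_apply (a : Fin n → ℤ) (G : MvPolynomial (Fin n) ℂ) :
    shEnd a G = shiftPolyC a G := rfl

lemma shEnd_zero : shEnd (n := n) 0 = 1 := by
  apply LinearMap.ext; intro G
  show aeval (fun j => X j + C (((0 : Fin n → ℤ) j : ℤ) : ℂ)) G = G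
  have : (fun j : Fin n => X j + C (((0 : Fin n → ℤ) j : ℤ) : ℂ)) = X := by
    funext j; simp
  rw [this, aeval_X_left_apply]

lemma shEnd_add (a b : Fin n → ℤ) : shEnd (a + b) = shEnd a * shEnd b := by
  apply LinearMap.ext; intro G
  show aeval (fun j => X j + C (((a + b) j : ℤ) : ℂ)) G
      = aeval (fun j => X j + C ((a j : ℂ))) (aeval (fun j => X j + C ((b j : ℂ))) G)
  rw [← AlgHom.comp_apply, comp_aeval]
  have h : (fun i : Fin n => (aeval fun j => X j + C ((a j : ℂ))) (X i + C ((b i : ℂ))))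
      = fun j => X j + C (((a + b) j : ℤ) : ℂ) := by
    funext j
    simp only [map_add, aeval_X, aeval_C, algebraMap_eq, Pi.add_apply]
    push_cast
    rw [map_add, add_assoc]
  rw [h]

noncomputable def shiftEndC : Multiplicative (Fin n → ℤ) →* Module.End ℂ (MvPolynomial (Fin n) ℂ) where
  toFun a := shEnd (Multiplicative.toAdd a)
  map_one' := shEnd_zero
  map_mul' a b := shEnd_add _ _

noncomputable def opHomC : AddMonoidAlgebra ℂ (Fin n → ℤ) →ₐ[ℂ] Module.End ℂ (MvPolynomial (Fin n) ℂ) :=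
  AddMonoidAlgebra.lift ℂ _ (Fin n → ℤ) shiftEndC

lemma opApplyC_eq (Q : AddMonoidAlgebra ℂ (Fin n → ℤ)) (G : MvPolynomial (Fin n) ℂ) :
    opApplyC Q G = opHomC Q G := by
  rw [opHomC, AddMonoidAlgebra.lift_apply, opApplyC]
  simp only [Finsupp.sum, LinearMap.coe_sum, Finset.sum_apply, LinearMap.smul_apply]
  rfl

lemma opApplyC_one (G : MvPolynomial (Fin n) ℂ) :
    opApplyC (1 : AddMonoidAlgebra ℂ (Fin n → ℤ)) G = G := by
  rw [opApplyC_eq, map_one]; rfl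

lemma opApplyC_mul (Q R : AddMonoidAlgebra ℂ (Fin n → ℤ)) (G : MvPolynomial (Fin n) ℂ) :
    opApplyC (Q * R) G = opApplyC Q (opApplyC R G) := by
  simp only [opApplyC_eq, map_mul]; rfl

lemma opApplyC_addQ (Q R : AddMonoidAlgebra ℂ (Fin n → ℤ)) (G : MvPolynomial (Fin n) ℂ) :
    opApplyC (Q + R) G = opApplyC Q G + opApplyC R G := by
  simp only [opApplyC_eq, map_add, LinearMap.add_apply]

lemma opApplyC_subQ (Q R : AddMonoidAlgebra ℂ (Fin n → ℤ)) (G : MvPolynomial (Fin n) ℂ) :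
    opApplyC (Q - R) G = opApplyC Q G - opApplyC R G := by
  simp only [opApplyC_eq, map_sub, LinearMap.sub_apply]

lemma opApplyC_negQ (Q : AddMonoidAlgebra ℂ (Fin n → ℤ)) (G : MvPolynomial (Fin n) ℂ) :
    opApplyC (-Q) G = -opApplyC Q G := by
  simp only [opApplyC_eq, map_neg, LinearMap.neg_apply]

lemma opApplyC_sumQ {ι : Type*} (s : Finset ι) (f : ι → AddMonoidAlgebra ℂ (Fin n → ℤ))
    (G : MvPolynomial (Fin n) ℂ) :
    opApplyC (∑ l ∈ s, f l) G = ∑ l ∈ s, opApplyC (f l) G := by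
  simp only [opApplyC_eq, map_sum, LinearMap.coe_sum, Finset.sum_apply]

lemma opApplyC_zero_arg (Q : AddMonoidAlgebra ℂ (Fin n → ℤ)) :
    opApplyC Q (0 : MvPolynomial (Fin n) ℂ) = 0 := by
  rw [opApplyC_eq]; exact map_zero _

lemma opApplyC_sub_arg (Q : AddMonoidAlgebra ℂ (Fin n → ℤ)) (G H : MvPolynomial (Fin n) ℂ) :
    opApplyC Q (G - H) = opApplyC Q G - opApplyC Q H := by
  rw [opApplyC_eq, opApplyC_eq, opApplyC_eq]; exact map_sub _ _ _

lemma opApplyC_single (a : Fin n → ℤ) (c : ℂ) (G : MvPolynomial (Fin n) ℂ) :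
    opApplyC (AddMonoidAlgebra.single a c) G = c • shiftPolyC a G := by
  rw [opApplyC]
  exact Finsupp.sum_single_index (by simp)

lemma shiftPolyC_sum {ι : Type*} (a : Fin n → ℤ) (s : Finset ι)
    (f : ι → MvPolynomial (Fin n) ℂ) :
    shiftPolyC a (∑ x ∈ s, f x) = ∑ x ∈ s, shiftPolyC a (f x) :=
  map_sum (aeval _) _ _

lemma shiftPolyC_monomial (a : Fin n → ℤ) (m : Fin n →₀ ℕ) (c : ℂ) :
    shiftPolyC a (monomial m c) = C c * ∏ j ∈ m.support, (X j + C ((a j : ℂ))) ^ (m j) := by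
  rw [shiftPolyC, aeval_monomial, algebraMap_eq, Finsupp.prod]

lemma degreeOf_shift_monomial_le (i : Fin n) (a : Fin n → ℤ) (m : Fin n →₀ ℕ) (c : ℂ) :
    degreeOf i (shiftPolyC a (monomial m c)) ≤ m i := by
  rw [shiftPolyC_monomial]
  refine le_trans (degreeOf_mul_le _ _ _) ?_
  rw [degreeOf_C, zero_add]
  refine le_trans (degreeOf_prod_le _ _ _) ?_
  refine le_trans (Finset.sum_le_sum (f := fun j => degreeOf i ((X j + C ((a j : ℂ))) ^ m j))
    (g := fun j => if i = j then m j else 0) (fun j _ => ?_)) ?_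
  · refine le_trans (degreeOf_pow_le _ _ _) ?_
    have hb : degreeOf i (X j + C ((a j : ℂ))) ≤ if i = j then 1 else 0 := by
      refine le_trans (degreeOf_add_le _ _ _) ?_
      rw [degreeOf_C, degreeOf_X]
      simp
    calc m j * degreeOf i (X j + C ((a j : ℂ))) ≤ m j * (if i = j then 1 else 0) :=
          Nat.mul_le_mul_left _ hb
      _ = if i = j then m j else 0 := by split <;> simp
  · rw [Finset.sum_ite_eq]
    split <;> simp

lemma degreeOf_shift_le (i : Fin n) (a : Fin n → ℤ) (G : MvPolynomial (Fin n) ℂ) :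
    degreeOf i (shiftPolyC a G) ≤ degreeOf i G := by
  conv_lhs => rw [G.as_sum]
  rw [shiftPolyC_sum]
  refine le_trans (degreeOf_sum_le _ _ _) (Finset.sup_le fun m hm => ?_)
  exact le_trans (degreeOf_shift_monomial_le i a m _) (monomial_le_degreeOf i hm)

lemma opApply_deg_le (i : Fin n) (Q : AddMonoidAlgebra ℂ (Fin n → ℤ))
    (G : MvPolynomial (Fin n) ℂ) :
    degreeOf i (opApplyC Q G) ≤ degreeOf i G := by
  rw [opApplyC, Finsupp.sum]
  refine le_trans (degreeOf_sum_le _ _ _) (Finset.sup_le fun a _ => ?_)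
  rw [smul_eq_C_mul]
  refine le_trans (degreeOf_mul_le _ _ _) ?_
  rw [degreeOf_C, zero_add]
  exact degreeOf_shift_le i a G

lemma shift_monomial_fixed (i : Fin n) (m : Fin n →₀ ℕ) (c : ℂ) (h : m i = 0) :
    shiftPolyC (Pi.single i 1) (monomial m c) = monomial m c := by
  rw [shiftPolyC_monomial, monomial_eq, Finsupp.prod]
  congr 1
  refine Finset.prod_congr rfl fun j hj => ?_
  have hji : j ≠ i := fun e => (Finsupp.mem_support_iff.mp hj) (e ▸ h)
  rw [Pi.single_eq_of_ne hji]
  simp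

lemma shift_fixed_of_deg0 (i : Fin n) (G : MvPolynomial (Fin n) ℂ) (h : degreeOf i G = 0) :
    shiftPolyC (Pi.single i 1) G = G := by
  conv_lhs => rw [G.as_sum]
  conv_rhs => rw [G.as_sum]
  rw [shiftPolyC_sum]
  refine Finset.sum_congr rfl fun m hm => ?_
  exact shift_monomial_fixed i m _ (Nat.le_zero.mp (h ▸ monomial_le_degreeOf i hm))

lemma degreeOf_binom_le (i : Fin n) (k : ℕ) :
    degreeOf i ((X i + 1 : MvPolynomial (Fin n) ℂ) ^ k - X i ^ k) ≤ k - 1 := by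
  cases k with
  | zero => simp
  | succ k' =>
    rw [add_pow]
    simp only [one_pow, mul_one]
    rw [Finset.sum_range_succ, Nat.choose_self, Nat.cast_one, mul_one, add_sub_cancel_right]
    refine le_trans (degreeOf_sum_le _ _ _) (Finset.sup_le fun t ht => ?_)
    refine le_trans (degreeOf_mul_le _ _ _) ?_
    have h1 : degreeOf i ((Nat.choose (k' + 1) t : MvPolynomial (Fin n) ℂ)) = 0 := by
      rw [← map_natCast (C : ℂ →+* MvPolynomial (Fin n) ℂ), degreeOf_C]
    rw [h1, add_zero]
    refine le_trans (degreeOf_pow_le _ _ _) ?_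
    rw [degreeOf_X, if_pos rfl, mul_one]
    exact Nat.lt_succ_iff.mp (Finset.mem_range.mp ht)

lemma key_monomial (i : Fin n) (m : Fin n →₀ ℕ) (c : ℂ) :
    degreeOf i (shiftPolyC (Pi.single i 1) (monomial m c) - monomial m c) ≤ m i - 1 := by
  by_cases h : m i = 0
  · rw [shift_monomial_fixed i m c h, sub_self]
    simp
  · have hi : i ∈ m.support := Finsupp.mem_support_iff.mpr h
    have hR : degreeOf i (∏ j ∈ m.support.erase i, (X j : MvPolynomial (Fin n) ℂ) ^ m j) ≤ 0 := by
      refine le_trans (degreeOf_prod_le _ _ _) ?_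
      refine le_trans (Finset.sum_le_sum (g := fun _ => 0) fun j hj => ?_) (by simp)
      refine le_trans (degreeOf_pow_le _ _ _) ?_
      rw [degreeOf_X, if_neg (Finset.ne_of_mem_erase hj).symm, mul_zero]
    have key : shiftPolyC (Pi.single i 1) (monomial m c) - monomial m c
        = (C c * ∏ j ∈ m.support.erase i, (X j : MvPolynomial (Fin n) ℂ) ^ m j) *
          ((X i + 1) ^ m i - X i ^ m i) := by
      rw [shiftPolyC_monomial, monomial_eq, Finsupp.prod]
      rw [← Finset.prod_erase_mul _ _ hi, ← Finset.prod_erase_mul _ _ hi]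
      have he : ∏ j ∈ m.support.erase i,
            (X j + C (((Pi.single i 1 : Fin n → ℤ) j : ℤ) : ℂ)) ^ m j
          = ∏ j ∈ m.support.erase i, (X j : MvPolynomial (Fin n) ℂ) ^ m j := by
        refine Finset.prod_congr rfl fun j hj => ?_
        rw [Pi.single_eq_of_ne (Finset.ne_of_mem_erase hj)]
        simp
      rw [he]
      have hs : C (((Pi.single i 1 : Fin n → ℤ) i : ℤ) : ℂ) = (1 : MvPolynomial (Fin n) ℂ) := by
        simp
      rw [hs]
      ring
    rw [key]
    refine le_trans (degreeOf_mul_le _ _ _) ?_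
    have hCR : degreeOf i (C c * ∏ j ∈ m.support.erase i,
        (X j : MvPolynomial (Fin n) ℂ) ^ m j) ≤ 0 :=
      le_trans (degreeOf_mul_le _ _ _) (by rw [degreeOf_C, zero_add]; exact hR)
    have hb := degreeOf_binom_le i (m i)
    omega

lemma degreeOf_Dapp_le (i : Fin n) (G : MvPolynomial (Fin n) ℂ) :
    degreeOf i (shiftPolyC (Pi.single i 1) G - G) ≤ degreeOf i G - 1 := by
  conv_lhs => rw [G.as_sum]
  rw [shiftPolyC_sum, ← Finset.sum_sub_distrib]
  refine le_trans (degreeOf_sum_le _ _ _) (Finset.sup_le fun m hm => ?_)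
  exact le_trans (key_monomial i m _) (Nat.sub_le_sub_right (monomial_le_degreeOf i hm) 1)

lemma opApplyC_Dlt (i : Fin n) (G : MvPolynomial (Fin n) ℂ) :
    opApplyC (DltC i) G = shiftPolyC (Pi.single i 1) G - G := by
  rw [DltC, opApplyC_subQ, opApplyC_one, EshC, opApplyC_single, one_smul]

lemma M_zero (i : Fin n) (Q : AddMonoidAlgebra ℂ (Fin n → ℤ)) (G : MvPolynomial (Fin n) ℂ)
    (h : degreeOf i G = 0) : opApplyC (DltC i * Q) G = 0 := by
  rw [opApplyC_mul, opApplyC_Dlt,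
    shift_fixed_of_deg0 i _ (Nat.le_zero.mp (le_trans (opApply_deg_le i Q G) h.le)), sub_self]

lemma M_deg (i : Fin n) (Q : AddMonoidAlgebra ℂ (Fin n → ℤ)) (G : MvPolynomial (Fin n) ℂ) :
    degreeOf i (opApplyC (DltC i * Q) G) ≤ degreeOf i G - 1 := by
  rw [mul_comm, opApplyC_mul]
  refine le_trans (opApply_deg_le i Q _) ?_
  rw [opApplyC_Dlt]
  exact degreeOf_Dapp_le i G

lemma vanish (i : Fin n) (Q : AddMonoidAlgebra ℂ (Fin n → ℤ)) :
    ∀ d (G : MvPolynomial (Fin n) ℂ), degreeOf i G ≤ d →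
      opApplyC ((DltC i * Q) ^ (d + 1)) G = 0 := by
  intro d
  induction d with
  | zero =>
    intro G hG
    rw [pow_one]
    exact M_zero i Q G (Nat.le_zero.mp hG)
  | succ d ih =>
    intro G hG
    rw [pow_succ, opApplyC_mul]
    refine ih _ (le_trans (M_deg i Q G) (by omega))

lemma vanish' (i : Fin n) (Q : AddMonoidAlgebra ℂ (Fin n → ℤ)) (G : MvPolynomial (Fin n) ℂ)
    (l : ℕ) (h : degreeOf i G < l) : opApplyC ((DltC i * Q) ^ l) G = 0 := by
  obtain ⟨r, rfl⟩ : ∃ r, l = (degreeOf i G + 1) + r := ⟨l - (degreeOf i G + 1), by omega⟩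
  rw [pow_add, opApplyC_mul]
  exact vanish i Q _ _ (opApply_deg_le i _ G)

lemma neg_vanish (i : Fin n) (Q : AddMonoidAlgebra ℂ (Fin n → ℤ)) (G : MvPolynomial (Fin n) ℂ)
    (l : ℕ) (h : degreeOf i G < l) : opApplyC ((-(DltC i * Q)) ^ l) G = 0 := by
  rw [neg_pow, opApplyC_mul, vanish' i Q G l h, opApplyC_zero_arg]

lemma degreeOf_add_eq_left (i : Fin n) (a b : MvPolynomial (Fin n) ℂ)
    (h : degreeOf i b < degreeOf i a) : degreeOf i (a + b) = degreeOf i a := by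
  refine le_antisymm (le_trans (degreeOf_add_le _ _ _) (max_le le_rfl h.le)) ?_
  have h2 : a = (a + b) - b := by ring
  have h3 := degreeOf_sub_le i (a + b) b
  rw [← h2] at h3
  rcases le_max_iff.mp h3 with h4 | h4 <;> omega

lemma op_split (i : Fin n) (Q : AddMonoidAlgebra ℂ (Fin n → ℤ)) (G : MvPolynomial (Fin n) ℂ) :
    opApplyC (1 + DltC i * Q) G = G + opApplyC (DltC i * Q) G := by
  rw [opApplyC_addQ, opApplyC_one]

lemma op_deg (i : Fin n) (Q : AddMonoidAlgebra ℂ (Fin n → ℤ)) (G : MvPolynomial (Fin n) ℂ) :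
    degreeOf i (opApplyC (1 + DltC i * Q) G) = degreeOf i G := by
  rw [op_split]
  by_cases h0 : degreeOf i G = 0
  · rw [M_zero i Q G h0, add_zero]
  · have hm := M_deg i Q G
    exact degreeOf_add_eq_left i G _ (by omega)

lemma op_inj (i : Fin n) (Q : AddMonoidAlgebra ℂ (Fin n → ℤ)) :
    Function.Injective (opApplyC (1 + DltC i * Q)) := by
  have hker : ∀ G : MvPolynomial (Fin n) ℂ, opApplyC (1 + DltC i * Q) G = 0 → G = 0 := by
    intro G hG
    rw [op_split] at hG
    have h1 : G = opApplyC (-(DltC i * Q)) G := by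
      rw [opApplyC_negQ]
      linear_combination hG
    have h2 : ∀ l, G = opApplyC ((-(DltC i * Q)) ^ l) G := by
      intro l
      induction l with
      | zero => rw [pow_zero, opApplyC_one]
      | succ l ih =>
        rw [pow_succ', opApplyC_mul, ← ih, ← h1]
    have h3 := h2 (degreeOf i G + 1)
    rwa [neg_vanish i Q G _ (Nat.lt_succ_self _)] at h3
  intro G H h
  have h4 : opApplyC (1 + DltC i * Q) (G - H) = 0 := by
    rw [opApplyC_sub_arg, h, sub_self]
  exact sub_eq_zero.mp (hker _ h4)

lemma op_section (i : Fin n) (Q : AddMonoidAlgebra ℂ (Fin n → ℤ)) (G : MvPolynomial (Fin n) ℂ) :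
    opApplyC (1 + DltC i * Q)
      (∑ l ∈ Finset.range (degreeOf i G + 1), opApplyC ((-(DltC i * Q)) ^ l) G) = G := by
  set N := degreeOf i G + 1 with hN
  have h1 : ∑ l ∈ Finset.range N, opApplyC ((-(DltC i * Q)) ^ l) G
      = opApplyC (∑ l ∈ Finset.range N, (-(DltC i * Q)) ^ l) G := (opApplyC_sumQ _ _ _).symm
  rw [h1, ← opApplyC_mul]
  have h2 : (1 + DltC i * Q) * (∑ l ∈ Finset.range N, (-(DltC i * Q)) ^ l)
      = 1 - (-(DltC i * Q)) ^ N := by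
    have h3 := geom_sum_mul (-(DltC i * Q)) N
    linear_combination -h3
  rw [h2, opApplyC_subQ, opApplyC_one, neg_vanish i Q G N (by omega), sub_zero]

end OpAux

open OpAux

/-- `Op := id + Δ_{k_i} p(E_{k_1},…,E_{k_n})` is bijective on `ℂ[k₁,…,k_n]`; its inverse is
given by the (finite on each polynomial) series `∑_{l≥0} (-1)^l Δ_{k_i}^l p(E)^l`, whose
`l = 0` term is the identity; and `Op` and `Op⁻¹` preserve the degree in `k_i`. -/
theorem op_invertible (n : ℕ) (p : AddMonoidAlgebra ℂ (Fin n → ℤ)) (i : Fin n) :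
    Function.Bijective (opApplyC (1 + DltC i * p)) ∧
    (∀ G : MvPolynomial (Fin n) ℂ, ∃ N : ℕ,
      (∀ l : ℕ, N ≤ l → opApplyC ((-(DltC i * p)) ^ l) G = 0) ∧
      opApplyC ((-(DltC i * p)) ^ 0) G = G ∧
      opApplyC (1 + DltC i * p)
        (∑ l ∈ Finset.range N, opApplyC ((-(DltC i * p)) ^ l) G) = G) ∧
    (∀ G : MvPolynomial (Fin n) ℂ,
      degreeOf i (opApplyC (1 + DltC i * p) G) = degreeOf i G) ∧
    (∀ G : MvPolynomial (Fin n) ℂ,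
      degreeOf i (Function.invFun (opApplyC (1 + DltC i * p)) G) = degreeOf i G) := by
  have hinj := op_inj i p
  have hsurj : Function.Surjective (opApplyC (1 + DltC i * p)) := fun G =>
    ⟨_, op_section i p G⟩
  refine ⟨⟨hinj, hsurj⟩, ?_, fun G => op_deg i p G, ?_⟩
  · intro G
    refine ⟨degreeOf i G + 1, fun l hl => neg_vanish i p G l (by omega), ?_, op_section i p G⟩
    rw [pow_zero, opApplyC_one]
  · intro G
    obtain ⟨H, hH⟩ := hsurj G
    rw [← hH, Function.leftInverse_invFun hinj H, op_deg i p H]
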